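/- Fix n ∈ ℕ and suppose A_k = 0 for every k ∈ ℤ with k ∉ {−n, 0, n}. Then for every α ≥ 1 and every τ with 0 < τ ≤ 3π/4 the exact equality holds: E_n(A) = (1/(2^α ∫_0^τ sin^α(t/2) dt)) · ∫_0^τ ω_α(A, t/λ_n) dt. -/

import Mathlib

open MeasureTheory Real Filter Finset intervalIntegral
open scoped ENNReal Topology

noncomputable section

/-- `M` is an Orlicz function: nondecreasing and convex on `[0,∞)`, `M 0 = 0`,
and `M t → ∞` as `t → ∞`. -/
def IsOrlicz (M : ℝ → ℝ) : Prop :=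
  MonotoneOn M (Set.Ici 0) ∧ ConvexOn ℝ (Set.Ici 0) M ∧ M 0 = 0 ∧
    Filter.Tendsto M Filter.atTop Filter.atTop

/-- The Legendre conjugate `M*(v) = sup {uv - M u : u ≥ 0}`, valued in `[0,∞]`. -/
def Mstar (M : ℝ → ℝ) (v : ℝ) : ℝ≥0∞ :=
  ⨆ (u : ℝ) (_ : 0 ≤ u), ENNReal.ofReal (u * v - M u)

/-- The set `Γ` of positive sequences `γ` with `Σ_k M_k^*(γ_k) ≤ 1`. -/
def GammaSet (M : ℤ → ℝ → ℝ) : Set (ℤ → ℝ) :=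
  {γ | (∀ k, 0 < γ k) ∧ ∑' k : ℤ, Mstar (M k) (γ k) ≤ 1}

/-- The Orlicz norm `‖A‖_M = sup_{γ ∈ Γ} Σ_k γ_k |A_k|` of a sequence of
Fourier coefficients, valued in `[0,∞]`. -/
def orliczNorm (M : ℤ → ℝ → ℝ) (A : ℤ → ℂ) : ℝ≥0∞ :=
  ⨆ γ ∈ GammaSet M, ∑' k : ℤ, ENNReal.ofReal (γ k * ‖A k‖)

/-- The best approximation `E_n(A) = sup_{γ ∈ Γ} Σ_{|k| ≥ n} γ_k |A_k|`. -/
def bestE (M : ℤ → ℝ → ℝ) (A : ℤ → ℂ) (n : ℕ) : ℝ≥0∞ :=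
  ⨆ γ ∈ GammaSet M, ∑' k : ℤ,
    if (n : ℤ) ≤ |k| then ENNReal.ofReal (γ k * ‖A k‖) else 0

/-- The generalized modulus of smoothness
`ω_φ(A, δ) = sup_{|h| ≤ δ} sup_{γ ∈ Γ} Σ_k γ_k φ(λ_k h) |A_k|`. -/
def genMod (Λ : ℤ → ℝ) (M : ℤ → ℝ → ℝ) (A : ℤ → ℂ) (φ : ℝ → ℝ) (δ : ℝ) : ℝ≥0∞ :=
  ⨆ (h : ℝ) (_ : |h| ≤ δ), ⨆ γ ∈ GammaSet M, ∑' k : ℤ,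
    ENNReal.ofReal (γ k * φ (Λ k * h) * ‖A k‖)

/-- The class `Φ`: continuous bounded nonnegative even functions vanishing at `0`
whose zero set has Lebesgue measure zero. -/
def IsPhi (φ : ℝ → ℝ) : Prop :=
  Continuous φ ∧ (∃ C, ∀ t, φ t ≤ C) ∧ (∀ t, 0 ≤ φ t) ∧ φ 0 = 0 ∧
    (∀ t, φ (-t) = φ t) ∧ MeasureTheory.volume {t : ℝ | φ t = 0} = 0

/-- A symmetric sequence of Fourier exponents: `λ_0 = 0`, `λ_{-k} = -λ_k`,
and `0 < λ_k < λ_{k+1}` for `k ≥ 1`. -/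
def IsExponents (Λ : ℤ → ℝ) : Prop :=
  Λ 0 = 0 ∧ (∀ k, Λ (-k) = -Λ k) ∧ (∀ k : ℤ, 1 ≤ k → 0 < Λ k) ∧
    (∀ k : ℤ, 1 ≤ k → Λ k < Λ (k + 1))

/-- `φ_α(t) = 2^{α/2} (1 - cos t)^{α/2}`, so that `ω_{φ_α} = ω_α`. -/
def phiAlpha (α : ℝ) (t : ℝ) : ℝ := 2 ^ (α / 2) * (1 - Real.cos t) ^ (α / 2)

/-- `sinc t = sin t / t` for `t ≠ 0`, `sinc 0 = 1`. -/
def sincFn (t : ℝ) : ℝ := if t = 0 then 1 else Real.sin t / t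

/-- `φ̃_m(t) = (1 - sinc t)^m`, so that `ω_{φ̃_m} = ω̃_m`. -/
def phiTilde (m : ℕ) (t : ℝ) : ℝ := (1 - sincFn t) ^ m

lemma phiAlpha_nonneg (α t : ℝ) : 0 ≤ phiAlpha α t :=
  mul_nonneg (Real.rpow_nonneg (by norm_num) _)
    (Real.rpow_nonneg (sub_nonneg.2 (Real.cos_le_one t)) _)

lemma phiAlpha_neg (α t : ℝ) : phiAlpha α (-t) = phiAlpha α t := by
  simp [phiAlpha, Real.cos_neg]

lemma phiAlpha_zero {α : ℝ} (hα : α ≠ 0) : phiAlpha α 0 = 0 := by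
  simp [phiAlpha, Real.zero_rpow (div_ne_zero hα two_ne_zero)]

lemma phiAlpha_eq (α u : ℝ) : phiAlpha α u = 2 ^ α * |Real.sin (u / 2)| ^ α := by
  have h1 : 1 - Real.cos u = 2 * |Real.sin (u / 2)| ^ 2 := by
    rw [Real.abs_sin_half, Real.sq_sqrt (by nlinarith [Real.cos_le_one u])]
    ring
  have h2 : (|Real.sin (u / 2)| ^ 2 : ℝ) ^ (α / 2) = |Real.sin (u / 2)| ^ α := by
    rw [← Real.rpow_natCast (|Real.sin (u / 2)|) 2, ← Real.rpow_mul (abs_nonneg _)]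
    norm_num
    ring_nf
  have h3 : (2 : ℝ) ^ (α / 2) * 2 ^ (α / 2) = 2 ^ α := by
    rw [← Real.rpow_add two_pos]; ring_nf
  rw [phiAlpha, h1, Real.mul_rpow (by norm_num) (by positivity), h2, ← mul_assoc, h3]

lemma sin_half_le {t u : ℝ} (ht0 : 0 ≤ t) (ht : t ≤ 3 * π / 4) (hu : |u| ≤ t) :
    |Real.sin (u / 2)| ≤ Real.sin (t / 2) := by
  have hpi := Real.pi_pos
  obtain ⟨hu1, hu2⟩ := abs_le.mp hu
  refine abs_le.mpr ⟨?_, ?_⟩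
  · rw [← Real.sin_neg]
    exact Real.sin_le_sin_of_le_of_le_pi_div_two (by nlinarith) (by nlinarith) (by nlinarith)
  · exact Real.sin_le_sin_of_le_of_le_pi_div_two (by nlinarith) (by nlinarith) (by nlinarith)
/-- **Sharpness of Corollary 3.** If `A` is supported on `{-n, 0, n}`, then for every
`α ≥ 1` and `0 < τ ≤ 3π/4` the exact equality
`E_n(A) = (1/(2^α ∫_0^τ sin^α(t/2) dt)) · ∫_0^τ ω_α(A, t/λ_n) dt` holds. -/
theorem jackson_unit_weight_sharp
    (Λ : ℤ → ℝ) (M : ℤ → ℝ → ℝ) (A : ℤ → ℂ)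
    (hΛ : IsExponents Λ) (hM : ∀ k, IsOrlicz (M k)) (hA : orliczNorm M A ≠ ⊤)
    (n : ℕ) (hn : 1 ≤ n)
    (hsupp : ∀ k : ℤ, k ≠ -(n : ℤ) → k ≠ 0 → k ≠ (n : ℤ) → A k = 0)
    (α : ℝ) (hα : 1 ≤ α) (τ : ℝ) (hτ0 : 0 < τ) (hτ : τ ≤ 3 * π / 4) :
    (bestE M A n).toReal
      = (1 / (2 ^ α * ∫ t in (0 : ℝ)..τ, Real.sin (t / 2) ^ α)) *
          ∫ t in (0 : ℝ)..τ, (genMod Λ M A (phiAlpha α) (t / Λ n)).toReal := by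
  have hpi := Real.pi_pos
  obtain ⟨hΛ0, hΛneg, hΛpos, _⟩ := hΛ
  have hnZ : (1 : ℤ) ≤ (n : ℤ) := by exact_mod_cast hn
  have hLpos : 0 < Λ (n : ℤ) := hΛpos _ hnZ
  have hα0 : (0 : ℝ) < α := lt_of_lt_of_le one_pos hα
  have hne : (-(n : ℤ)) ≠ (n : ℤ) := by omega
  set B := bestE M A n with hB
  -- finiteness of B
  have hBfin : B ≠ ⊤ := by
    refine ne_top_of_le_ne_top hA ?_
    refine iSup_mono fun γ => iSup_mono fun hγ => ENNReal.tsum_le_tsum fun k => ?_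
    split_ifs
    exacts [le_rfl, zero_le]
  -- the inner sum of bestE
  have hsum2 : ∀ γ : ℤ → ℝ,
      (∑' k : ℤ, if (n : ℤ) ≤ |k| then ENNReal.ofReal (γ k * ‖A k‖) else 0)
        = ENNReal.ofReal (γ (-(n : ℤ)) * ‖A (-(n : ℤ))‖)
          + ENNReal.ofReal (γ (n : ℤ) * ‖A (n : ℤ)‖) := by
    intro γ
    rw [tsum_eq_sum (s := ({-(n : ℤ), (n : ℤ)} : Finset ℤ))
      (fun k hk => ?_), Finset.sum_pair hne, if_pos (by simp), if_pos (by simp)]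
    simp only [Finset.mem_insert, Finset.mem_singleton, not_or] at hk
    by_cases hc : (n : ℤ) ≤ |k|
    · rw [if_pos hc, hsupp k hk.1 (by rintro rfl; simp at hc; omega) hk.2]
      simp
    · rw [if_neg hc]
  -- the inner sum of genMod factors
  have hsum1 : ∀ (γ : ℤ → ℝ) (h : ℝ),
      (∑' k : ℤ, ENNReal.ofReal (γ k * phiAlpha α (Λ k * h) * ‖A k‖))
        = ENNReal.ofReal (phiAlpha α (Λ (n : ℤ) * h)) *
          ∑' k : ℤ, (if (n : ℤ) ≤ |k| then ENNReal.ofReal (γ k * ‖A k‖) else 0) := by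
    intro γ h
    have hc : 0 ≤ phiAlpha α (Λ (n : ℤ) * h) := phiAlpha_nonneg _ _
    have hΛn : Λ (-(n : ℤ)) = -Λ (n : ℤ) := hΛneg _
    rw [hsum2 γ, tsum_eq_sum (s := ({-(n : ℤ), (n : ℤ)} : Finset ℤ)) (fun k hk => ?_),
      Finset.sum_pair hne]
    · rw [hΛn, neg_mul, phiAlpha_neg, mul_add,
        show γ (-(n : ℤ)) * phiAlpha α (Λ (n : ℤ) * h) * ‖A (-(n : ℤ))‖
          = phiAlpha α (Λ (n : ℤ) * h) * (γ (-(n : ℤ)) * ‖A (-(n : ℤ))‖) by ring,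
        show γ (n : ℤ) * phiAlpha α (Λ (n : ℤ) * h) * ‖A (n : ℤ)‖
          = phiAlpha α (Λ (n : ℤ) * h) * (γ (n : ℤ) * ‖A (n : ℤ)‖) by ring,
        ENNReal.ofReal_mul hc, ENNReal.ofReal_mul hc]
    · simp only [Finset.mem_insert, Finset.mem_singleton, not_or] at hk
      by_cases h0 : k = 0
      · subst h0
        rw [hΛ0, zero_mul, phiAlpha_zero hα0.ne']
        simp
      · rw [hsupp k hk.1 h0 hk.2]
        simp
  -- factorization of the γ-sup
  have hfac : ∀ h : ℝ,
      (⨆ γ ∈ GammaSet M, ∑' k : ℤ,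
          ENNReal.ofReal (γ k * phiAlpha α (Λ k * h) * ‖A k‖))
        = ENNReal.ofReal (phiAlpha α (Λ (n : ℤ) * h)) * B := by
    intro h
    rw [hB, bestE, ENNReal.mul_iSup]
    refine iSup_congr fun γ => ?_
    rw [ENNReal.mul_iSup]
    exact iSup_congr fun _ => hsum1 γ h
  -- value of genMod
  have hgen : ∀ t ∈ Set.uIcc (0 : ℝ) τ,
      genMod Λ M A (phiAlpha α) (t / Λ (n : ℤ))
        = ENNReal.ofReal (2 ^ α * Real.sin (t / 2) ^ α) * B := by
    intro t ht
    rw [Set.uIcc_of_le hτ0.le] at ht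
    obtain ⟨ht0, htτ⟩ := ht
    have htpi : t ≤ 3 * π / 4 := le_trans htτ hτ
    have hsin0 : 0 ≤ Real.sin (t / 2) :=
      Real.sin_nonneg_of_nonneg_of_le_pi (by linarith) (by nlinarith)
    have hδ : 0 ≤ t / Λ (n : ℤ) := div_nonneg ht0 hLpos.le
    rw [genMod]
    refine le_antisymm (iSup₂_le fun h hh => ?_) ?_
    · rw [hfac h]
      refine mul_le_mul_left (ENNReal.ofReal_le_ofReal ?_) B
      rw [phiAlpha_eq]
      have habs : |Λ (n : ℤ) * h| ≤ t := by
        rw [abs_mul, abs_of_pos hLpos]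
        calc Λ (n : ℤ) * |h| ≤ Λ (n : ℤ) * (t / Λ (n : ℤ)) :=
              mul_le_mul_of_nonneg_left hh hLpos.le
          _ = t := by field_simp
      exact mul_le_mul_of_nonneg_left
        (Real.rpow_le_rpow (abs_nonneg _) (sin_half_le ht0 htpi habs) hα0.le)
        (by positivity)
    · have hEq : Λ (n : ℤ) * (t / Λ (n : ℤ)) = t := by field_simp
      have : ENNReal.ofReal (2 ^ α * Real.sin (t / 2) ^ α) * B
          = (⨆ γ ∈ GammaSet M, ∑' k : ℤ,
              ENNReal.ofReal (γ k * phiAlpha α (Λ k * (t / Λ (n : ℤ))) * ‖A k‖)) := by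
        rw [hfac, hEq, phiAlpha_eq, abs_of_nonneg hsin0]
      rw [this]
      exact le_iSup₂ (f := fun (h : ℝ) (_ : |h| ≤ t / Λ (n : ℤ)) =>
        ⨆ γ ∈ GammaSet M, ∑' k : ℤ,
          ENNReal.ofReal (γ k * phiAlpha α (Λ k * h) * ‖A k‖))
        (t / Λ (n : ℤ)) (by rw [abs_of_nonneg hδ])
  -- rewrite the integral
  have hint : (∫ t in (0 : ℝ)..τ, (genMod Λ M A (phiAlpha α) (t / Λ (n : ℤ))).toReal)
      = (∫ t in (0 : ℝ)..τ, Real.sin (t / 2) ^ α) * (2 ^ α * B.toReal) := by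
    rw [← intervalIntegral.integral_mul_const]
    refine intervalIntegral.integral_congr fun t ht => ?_
    have ht' := ht
    rw [Set.uIcc_of_le hτ0.le] at ht'
    have hsin0 : 0 ≤ Real.sin (t / 2) :=
      Real.sin_nonneg_of_nonneg_of_le_pi (by linarith [ht'.1]) (by nlinarith [ht'.2])
    rw [hgen t ht, ENNReal.toReal_mul, ENNReal.toReal_ofReal
      (mul_nonneg (Real.rpow_nonneg (by norm_num) α) (Real.rpow_nonneg hsin0 α))]
    ring
  rw [hint]
  have hI : 0 < ∫ t in (0 : ℝ)..τ, Real.sin (t / 2) ^ α := by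
    refine intervalIntegral.intervalIntegral_pos_of_pos_on ?_ (fun x hx => ?_) hτ0
    · exact (((Real.continuous_sin.comp (continuous_id.div_const 2)).continuousOn).rpow_const
        (fun x _ => Or.inr hα0.le)).intervalIntegrable
    · exact Real.rpow_pos_of_pos
        (Real.sin_pos_of_pos_of_lt_pi (by linarith [hx.1]) (by nlinarith [hx.2])) α
  have h2 : (0 : ℝ) < 2 ^ α := Real.rpow_pos_of_pos two_pos α
  field_simp

end
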